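/- Let P(z) = ∑_{j=0}^m a_j z^{m-j} be a polynomial with complex coefficients and N an even positive integer with φ(N) ≤ m. Then Φ_N(z) divides P(z) if and only if for every h ∈ {0, 1, ..., N/2 - 1}, ∑_{d | N} μ(d) ∑_{j ≡ h - ∑_{p | d} N/p (mod N)} a_j = 0. -/

import Mathlib

open Polynomial Finset ArithmeticFunction

lemma aux_sum_divisors_moebius {N : ℕ} (hN : N ≠ 0) (g : Finset ℕ → ℂ) :
    ∑ d ∈ N.divisors, (moebius d : ℂ) * g d.primeFactors
      = ∑ t ∈ N.primeFactors.powerset, (-1:ℂ)^t.card * g t := by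
  classical
  rw [← Finset.sum_filter_of_ne (p := fun d => Squarefree d)
    (fun x _ hx => by
      by_contra hsq
      rw [ArithmeticFunction.moebius_eq_zero_of_not_squarefree hsq] at hx
      simp at hx)]
  rw [Nat.sum_divisors_filter_squarefree hN, Nat.factors_eq]

  refine Finset.sum_congr rfl fun t ht => ?_
  rw [Finset.mem_powerset] at ht
  have hprime : ∀ p ∈ t, p.Prime := fun p hp => Nat.prime_of_mem_primeFactors (ht hp)
  have hval : t.val.prod = ∏ p ∈ t, p := by rw [Finset.prod_val]; exact Finset.prod_congr rfl (fun _ _ => rfl)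
  have hpf : (∏ p ∈ t, p).primeFactors = t := Nat.primeFactors_prod hprime
  have hμ : moebius (∏ p ∈ t, p) = (-1) ^ t.card := by
    rw [ArithmeticFunction.isMultiplicative_moebius.map_prod _ t
      (fun p hp q hq hpq => (Nat.coprime_primes (hprime p hp) (hprime q hq)).2 hpq)]
    rw [Finset.prod_congr rfl (fun p hp => ArithmeticFunction.moebius_apply_prime (hprime p hp))]
    simp
  rw [hval, hpf, hμ]
  push_cast
  ring

lemma aux_powerset_prod {s : Finset ℕ} (x : ℕ → ℂ) :
    ∑ t ∈ s.powerset, (-1:ℂ)^t.card * ∏ p ∈ t, x p = ∏ p ∈ s, (1 - x p) := by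
  classical
  have h := Finset.prod_add (fun p => -x p) (fun _ => (1:ℂ)) s
  simp only [Finset.prod_const_one, mul_one] at h
  rw [Finset.prod_congr rfl (fun p _ => by ring : ∀ p ∈ s, (1 : ℂ) - x p = -x p + 1), h]
  refine Finset.sum_congr rfl fun t _ => ?_
  rw [show (∏ p ∈ t, -x p) = ∏ p ∈ t, (-1) * x p by simp, Finset.prod_mul_distrib,
    Finset.prod_const]

noncomputable def Tf (m N : ℕ) (a : ℕ → ℂ) : ZMod N → ℂ :=
  fun r => ∑ j ∈ (Finset.range (m+1)).filter (fun j : ℕ => (j : ZMod N) = r), a j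

noncomputable def σf (N : ℕ) : ℕ → ZMod N := fun d => ∑ p ∈ d.primeFactors, ((N / p : ℕ) : ZMod N)

noncomputable def Sf (m N : ℕ) (a : ℕ → ℂ) : ZMod N → ℂ :=
  fun h => ∑ d ∈ N.divisors, (moebius d : ℂ) * Tf m N a (h - σf N d)

section key
variable {m N : ℕ} [NeZero N] {a : ℕ → ℂ}

-- sum over range N equals sum over ZMod N
lemma sum_range_zmod (f : ZMod N → ℂ) :
    ∑ h ∈ Finset.range N, f (h : ZMod N) = ∑ r : ZMod N, f r := by
  refine Finset.sum_nbij' (fun h => (h : ZMod N)) (fun r => r.val) ?_ ?_ ?_ ?_ ?_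
  · intro h _; exact Finset.mem_univ _
  · intro r _; exact Finset.mem_range.2 (ZMod.val_lt r)
  · intro h hh; exact ZMod.val_natCast_of_lt (Finset.mem_range.1 hh)
  · intro r _; exact ZMod.natCast_rightInverse r
  · intro h _; rfl

lemma key_identity {z : ℂ} (hz : z ^ N = 1) :
    ∑ h ∈ Finset.range N, Sf m N a (h : ZMod N) * z ^ h
      = (∏ p ∈ N.primeFactors, (1 - z ^ (N / p))) * ∑ j ∈ Finset.range (m+1), a j * z ^ j := by
  classical
  have hN : N ≠ 0 := NeZero.ne N
  set E : ZMod N → ℂ := fun r => z ^ r.val with hE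
  have hEadd : ∀ r s : ZMod N, E (r + s) = E r * E s := by
    intro r s
    show z ^ (r + s).val = z ^ r.val * z ^ s.val
    rw [ZMod.val_add, ← pow_eq_pow_mod _ hz, pow_add]
  have hEnat : ∀ k : ℕ, E (k : ZMod N) = z ^ k := by
    intro k
    show z ^ (k : ZMod N).val = z ^ k
    rw [ZMod.val_natCast, ← pow_eq_pow_mod _ hz]
  -- step 1: sum over range → sum over ZMod
  have step1 : ∑ h ∈ Finset.range N, Sf m N a (h : ZMod N) * z ^ h
      = ∑ r : ZMod N, Sf m N a r * E r := by
    rw [← sum_range_zmod (fun r => Sf m N a r * E r)]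
    exact Finset.sum_congr rfl fun h _ => by rw [hEnat]
  rw [step1]
  -- step 2: G-tilde
  have hG : ∑ s : ZMod N, Tf m N a s * E s = ∑ j ∈ Finset.range (m+1), a j * z ^ j := by
    rw [← Finset.sum_fiberwise (Finset.range (m+1)) (fun j => (j : ZMod N))
      (fun j => a j * z ^ j)]
    refine Finset.sum_congr rfl fun s _ => ?_
    rw [Tf, Finset.sum_mul]
    refine Finset.sum_congr rfl fun j hj => ?_
    rw [Finset.mem_filter] at hj
    rw [← hj.2, hEnat]
  -- step 3: factor
  have hshift : ∀ c : ZMod N, ∑ r : ZMod N, Tf m N a (r - c) * E r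
      = E c * ∑ s : ZMod N, Tf m N a s * E s := by
    intro c
    rw [Finset.mul_sum]
    refine Fintype.sum_equiv (Equiv.subRight c) _ _ fun s => ?_
    simp only [Equiv.subRight_apply]
    have h3 : c + (s - c) = s := by ring
    have h2 : E s = E c * E (s - c) := by rw [← hEadd c (s - c), h3]
    rw [h2]
    ring
  have hfac : ∑ r : ZMod N, Sf m N a r * E r
      = (∑ d ∈ N.divisors, (moebius d : ℂ) * E (σf N d)) * ∑ s : ZMod N, Tf m N a s * E s := by
    simp only [Sf, Finset.sum_mul]
    rw [Finset.sum_comm]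
    refine Finset.sum_congr rfl fun d _ => ?_
    simp only [mul_assoc]
    rw [← Finset.mul_sum, hshift (σf N d)]
  rw [hfac, hG]
  congr 1
  -- step 4: moebius sum = product
  refine (aux_sum_divisors_moebius hN (fun t => E (∑ p ∈ t, ((N / p : ℕ) : ZMod N)))).trans ?_
  have hEsum : ∀ t : Finset ℕ, E (∑ p ∈ t, ((N / p : ℕ) : ZMod N))
      = ∏ p ∈ t, z ^ (N / p) := by
    intro t
    induction t using Finset.induction with
    | empty => simp [hE]
    | @insert p t hp ih =>
      rw [Finset.sum_insert hp, Finset.prod_insert hp, hEadd, ih, hEnat]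
  rw [Finset.sum_congr rfl fun t _ => by rw [hEsum t]]
  exact aux_powerset_prod _

end key
section more
variable {m N : ℕ} [NeZero N] {a : ℕ → ℂ}

lemma Sf_antisym (hNeven : Even N) (r : ZMod N) :
    Sf m N a (r + ((N/2 : ℕ) : ZMod N)) = - Sf m N a r := by
  classical
  have hN : N ≠ 0 := NeZero.ne N
  set c : ZMod N := ((N/2 : ℕ) : ZMod N) with hc
  have hcc : c + c = 0 := by
    rw [hc, ← Nat.cast_add, show N/2 + N/2 = N by obtain ⟨k, hk⟩ := hNeven; omega,
      ZMod.natCast_self]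
  have hceq : c = -c := eq_neg_of_add_eq_zero_left hcc
  have h2 : 2 ∈ N.primeFactors := Nat.mem_primeFactors.2 ⟨Nat.prime_two, hNeven.two_dvd, hN⟩
  have expand : ∀ x : ZMod N, Sf m N a x
      = ∑ t ∈ N.primeFactors.powerset,
          (-1:ℂ)^t.card * Tf m N a (x - ∑ p ∈ t, ((N/p : ℕ) : ZMod N)) :=
    fun x => aux_sum_divisors_moebius hN (fun t => Tf m N a (x - ∑ p ∈ t, ((N/p:ℕ) : ZMod N)))
  rw [expand, expand]
  have hsplit : N.primeFactors = insert 2 (N.primeFactors.erase 2) :=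
    (Finset.insert_erase h2).symm
  rw [hsplit, Finset.sum_powerset_insert (Finset.notMem_erase 2 _),
    Finset.sum_powerset_insert (Finset.notMem_erase 2 _)]
  have hA : ∀ t ∈ (N.primeFactors.erase 2).powerset,
      (-1:ℂ)^t.card * Tf m N a (r + c - ∑ p ∈ t, ((N/p : ℕ) : ZMod N))
      = -((-1:ℂ)^(insert 2 t).card *
          Tf m N a (r - ∑ p ∈ insert 2 t, ((N/p : ℕ) : ZMod N))) := by
    intro t ht
    have h2t : 2 ∉ t := fun h =>
      Finset.notMem_erase 2 _ (Finset.mem_powerset.1 ht h)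
    rw [Finset.card_insert_of_notMem h2t, Finset.sum_insert h2t, ← hc]
    have harg : r + c - ∑ p ∈ t, ((N/p : ℕ) : ZMod N)
        = r - (c + ∑ p ∈ t, ((N/p : ℕ) : ZMod N)) := by
      linear_combination hcc
    rw [harg, pow_succ]
    ring
  have hB : ∀ t ∈ (N.primeFactors.erase 2).powerset,
      (-1:ℂ)^(insert 2 t).card *
        Tf m N a (r + c - ∑ p ∈ insert 2 t, ((N/p : ℕ) : ZMod N))
      = -((-1:ℂ)^t.card * Tf m N a (r - ∑ p ∈ t, ((N/p : ℕ) : ZMod N))) := by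
    intro t ht
    have h2t : 2 ∉ t := fun h =>
      Finset.notMem_erase 2 _ (Finset.mem_powerset.1 ht h)
    rw [Finset.card_insert_of_notMem h2t, Finset.sum_insert h2t, ← hc]
    have harg : r + c - (c + ∑ p ∈ t, ((N/p : ℕ) : ZMod N))
        = r - ∑ p ∈ t, ((N/p : ℕ) : ZMod N) := by ring
    rw [harg, pow_succ]
    ring
  rw [Finset.sum_congr rfl hA, Finset.sum_congr rfl hB, Finset.sum_neg_distrib,
    Finset.sum_neg_distrib]
  ring

lemma exists_primefactor_pow_eq_one {z : ℂ} (hzN : z ^ N = 1)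
    (hnp : ¬ IsPrimitiveRoot z N) : ∃ p ∈ N.primeFactors, z ^ (N / p) = 1 := by
  have hN : N ≠ 0 := NeZero.ne N
  have hfin : IsOfFinOrder z := isOfFinOrder_iff_pow_eq_one.2 ⟨N, Nat.pos_of_ne_zero hN, hzN⟩
  have hd : orderOf z ∣ N := orderOf_dvd_of_pow_eq_one hzN
  have hdpos : 0 < orderOf z := hfin.orderOf_pos
  have hdN : orderOf z ≠ N := fun h => hnp (h ▸ IsPrimitiveRoot.orderOf z)
  obtain ⟨k, hk⟩ := hd
  have hk1 : k ≠ 1 := by intro h; rw [h, mul_one] at hk; exact hdN hk.symm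
  have hk0 : k ≠ 0 := by intro h; rw [h, mul_zero] at hk; exact hN hk
  obtain ⟨p, hpp, hpk⟩ : ∃ p, p.Prime ∧ p ∣ k :=
    ⟨k.minFac, Nat.minFac_prime hk1, Nat.minFac_dvd k⟩
  obtain ⟨k', hk'⟩ := hpk
  refine ⟨p, Nat.mem_primeFactors.2 ⟨hpp, ⟨orderOf z * k', by rw [hk, hk']; ring⟩, hN⟩, ?_⟩
  have hdiv : N / p = orderOf z * k' := by
    rw [hk, hk', show orderOf z * (p * k') = orderOf z * k' * p by ring,
      Nat.mul_div_cancel _ hpp.pos]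
  rw [hdiv, pow_mul, pow_orderOf_eq_one, one_pow]

end more

theorem divisibility_by_cyclotomic_even (m N : ℕ) (a : ℕ → ℂ) (hN : 1 ≤ N)
    (hNeven : Even N) (hm : N.totient ≤ m) :
    (Polynomial.cyclotomic N ℂ ∣ ∑ j ∈ Finset.range (m + 1), C (a j) * X ^ (m - j)) ↔
      ∀ h < N / 2,
        ∑ d ∈ N.divisors, (ArithmeticFunction.moebius d : ℂ) *
          ∑ j ∈ (Finset.range (m + 1)).filter
              (fun (j : ℕ) => (j : ℤ) ≡
                (h : ℤ) - ∑ p ∈ d.primeFactors, ((N / p : ℕ) : ℤ) [ZMOD (N : ℤ)]),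
            a j = 0 := by
  classical
  haveI : NeZero N := ⟨by omega⟩
  have hN0 : 0 < N := hN
  haveI : NeZero ((N : ℂ)) := ⟨Nat.cast_ne_zero.2 (by omega)⟩
  have hz₀ := Complex.isPrimitiveRoot_exp N (by omega)
  set P : ℂ[X] := ∑ j ∈ Finset.range (m + 1), C (a j) * X ^ (m - j) with hP
  -- rewrite RHS sums in terms of Sf
  have hRHS : ∀ h : ℕ,
      (∑ d ∈ N.divisors, (ArithmeticFunction.moebius d : ℂ) *
        ∑ j ∈ (Finset.range (m + 1)).filter
            (fun (j : ℕ) => (j : ℤ) ≡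
              (h : ℤ) - ∑ p ∈ d.primeFactors, ((N / p : ℕ) : ℤ) [ZMOD (N : ℤ)]),
          a j) = Sf m N a (h : ZMod N) := by
    intro h
    refine Finset.sum_congr rfl fun d _ => ?_
    congr 1
    refine Finset.sum_congr (Finset.filter_congr fun j _ => ?_) fun _ _ => rfl
    rw [show ((j : ℤ) ≡ (h : ℤ) - ∑ p ∈ d.primeFactors, ((N / p : ℕ) : ℤ) [ZMOD (N : ℤ)]) ↔
        (((j : ℤ) : ZMod N) = ((((h : ℤ) - ∑ p ∈ d.primeFactors, ((N / p : ℕ) : ℤ)) : ℤ) : ZMod N))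
      from (ZMod.intCast_eq_intCast_iff _ _ _).symm]
    simp only [σf, Int.cast_sub, Int.cast_sum, Int.cast_natCast]
  -- P(z) = z^m * A(z⁻¹)
  have evalP : ∀ z : ℂ, z ≠ 0 → eval z P
      = z ^ m * ∑ j ∈ Finset.range (m+1), a j * (z⁻¹) ^ j := by
    intro z hz0
    rw [hP, eval_finset_sum, Finset.mul_sum]
    refine Finset.sum_congr rfl fun j hj => ?_
    have hjm : j ≤ m := by have := Finset.mem_range.1 hj; omega
    have hkey : z ^ (m - j) * z ^ j = z ^ m := by rw [← pow_add, Nat.sub_add_cancel hjm]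
    simp only [eval_mul, eval_pow, eval_C, eval_X, inv_pow]
    field_simp
    linear_combination a j * hkey
  -- Step A
  have stepA : (cyclotomic N ℂ ∣ P) ↔ ∀ z ∈ primitiveRoots N ℂ, eval z P = 0 := by
    constructor
    · rintro ⟨q, hq⟩ z hzmem
      have hprim : IsPrimitiveRoot z N := (mem_primitiveRoots hN0).1 hzmem
      have hroot := (isRoot_cyclotomic_iff (R := ℂ)).2 hprim
      rw [IsRoot.def] at hroot
      rw [hq, eval_mul, hroot, zero_mul]
    · intro H
      rw [cyclotomic_eq_prod_X_sub_primitiveRoots hz₀]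
      refine Finset.prod_dvd_of_coprime ?_ fun z hzmem => dvd_iff_isRoot.2 (H z hzmem)
      intro u _ v _ huv
      exact pairwise_coprime_X_sub_C Function.injective_id huv
  -- Step B
  have stepB : (∀ z ∈ primitiveRoots N ℂ, eval z P = 0) ↔
      (∀ z : ℂ, IsPrimitiveRoot z N → (∑ j ∈ Finset.range (m+1), a j * z ^ j) = 0) := by
    constructor
    · intro H z hz
      have h0 : z ≠ 0 := hz.ne_zero (by omega)
      have hzi : IsPrimitiveRoot z⁻¹ N := hz.inv
      have h0i : z⁻¹ ≠ 0 := inv_ne_zero h0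
      have := H z⁻¹ ((mem_primitiveRoots hN0).2 hzi)
      rw [evalP z⁻¹ h0i, inv_inv] at this
      rcases mul_eq_zero.1 this with h | h
      · exact absurd h (pow_ne_zero _ h0i)
      · exact h
    · intro H z hzmem
      have hz := (mem_primitiveRoots hN0).1 hzmem
      have h0 : z ≠ 0 := hz.ne_zero (by omega)
      rw [evalP z h0, H z⁻¹ hz.inv, mul_zero]
  -- Step C
  have stepC : (∀ z : ℂ, IsPrimitiveRoot z N → (∑ j ∈ Finset.range (m+1), a j * z ^ j) = 0) ↔
      (∀ r : ZMod N, Sf m N a r = 0) := by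
    constructor
    · intro H r
      set F : ℂ[X] := ∑ h ∈ Finset.range N, C (Sf m N a (h : ZMod N)) * X ^ h with hF
      have hFroot : ∀ z ∈ nthRootsFinset N (1 : ℂ), eval z F = 0 := by
        intro z hzmem
        have hzN : z ^ N = 1 := (mem_nthRootsFinset hN0 (1 : ℂ)).1 hzmem
        have hFeval : eval z F = ∑ h ∈ Finset.range N, Sf m N a (h : ZMod N) * z ^ h := by
          rw [hF, eval_finset_sum]
          exact Finset.sum_congr rfl fun h _ => by simp
        rw [hFeval, key_identity hzN]
        by_cases hz : IsPrimitiveRoot z N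
        · rw [H z hz, mul_zero]
        · obtain ⟨p, hp, hpz⟩ := exists_primefactor_pow_eq_one hzN hz
          rw [Finset.prod_eq_zero hp (by rw [hpz]; ring), zero_mul]
      have hdvd : (X ^ N - 1 : ℂ[X]) ∣ F := by
        rw [X_pow_sub_one_eq_prod hN0 hz₀]
        refine Finset.prod_dvd_of_coprime ?_ fun z hzmem => dvd_iff_isRoot.2 (hFroot z hzmem)
        intro u _ v _ huv
        exact pairwise_coprime_X_sub_C Function.injective_id huv
      have hFzero : F = 0 := by
        by_contra hF0
        have h1 : (X ^ N - 1 : ℂ[X]).natDegree ≤ F.natDegree := natDegree_le_of_dvd hdvd hF0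
        have h2 : (X ^ N - 1 : ℂ[X]).natDegree = N := by
          rw [show (1 : ℂ[X]) = C 1 from (map_one C).symm, natDegree_X_pow_sub_C]
        have h3 : F.natDegree ≤ N - 1 := by
          refine natDegree_sum_le_of_forall_le _ _ fun h hh => ?_
          exact (natDegree_C_mul_X_pow_le _ _).trans (by
            have := Finset.mem_range.1 hh; omega)
        omega
      have hcoeff : ∀ k, k < N → Sf m N a (k : ZMod N) = 0 := by
        intro k hk
        have hc := congrArg (fun q : ℂ[X] => q.coeff k) hFzero
        simp only [hF, finset_sum_coeff, coeff_C_mul, coeff_X_pow, coeff_zero, mul_ite,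
          mul_one, mul_zero] at hc
        rw [show (fun x => if k = x then Sf m N a (x : ZMod N) else 0)
            = fun x => if k = x then (fun y : ℕ => Sf m N a (y : ZMod N)) x else 0 from rfl] at hc
        rw [Finset.sum_ite_eq (Finset.range N) k (fun y : ℕ => Sf m N a (y : ZMod N)),
          if_pos (Finset.mem_range.2 hk)] at hc
        exact hc
      have hval : r = ((r.val : ℕ) : ZMod N) := (ZMod.natCast_rightInverse r).symm
      rw [hval]
      exact hcoeff r.val (ZMod.val_lt r)
    · intro H z hz
      have hkey := key_identity (m := m) (a := a) hz.pow_eq_one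
      rw [Finset.sum_eq_zero (fun h _ => by rw [H, zero_mul])] at hkey
      have hRne : (∏ p ∈ N.primeFactors, (1 - z ^ (N / p))) ≠ 0 := by
        refine Finset.prod_ne_zero_iff.2 fun p hp => ?_
        rw [sub_ne_zero]
        intro hcontra
        have hdvd : N ∣ N / p := (hz.pow_eq_one_iff_dvd _).1 hcontra.symm
        have hple : p ∣ N := Nat.dvd_of_mem_primeFactors hp
        have h2 : 2 ≤ p := (Nat.prime_of_mem_primeFactors hp).two_le
        have h4 : N / p < N := Nat.div_lt_self hN0 (by omega)
        have h5 : 1 ≤ N / p := (Nat.one_le_div_iff (by omega)).2 (Nat.le_of_dvd hN0 hple)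
        have := Nat.le_of_dvd (by omega) hdvd
        omega
      rcases mul_eq_zero.1 hkey.symm with h | h
      · exact absurd h hRne
      · exact h
  -- Step D
  have stepD : (∀ r : ZMod N, Sf m N a r = 0) ↔
      (∀ h : ℕ, h < N / 2 → Sf m N a (h : ZMod N) = 0) := by
    constructor
    · exact fun H h _ => H _
    · intro H r
      have hval : r = ((r.val : ℕ) : ZMod N) := (ZMod.natCast_rightInverse r).symm
      by_cases hcase : r.val < N / 2
      · rw [hval]; exact H r.val hcase
      · have hlt : r.val < N := ZMod.val_lt r
        have h2 : r.val - N / 2 < N / 2 := by obtain ⟨k, hk⟩ := hNeven; omega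
        have hr : r = ((r.val - N / 2 : ℕ) : ZMod N) + ((N / 2 : ℕ) : ZMod N) := by
          rw [← Nat.cast_add, Nat.sub_add_cancel (le_of_not_gt hcase)]
          exact hval
        rw [hr, Sf_antisym hNeven, H _ h2, neg_zero]
  rw [stepA, stepB, stepC, stepD]
  exact forall_congr' fun h => imp_congr_right fun _ => by rw [hRHS h]
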